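/- Let f: ℝ^p → ℝ be differentiable and let σ_f, σ_{−f} ∈ ℝ be such that f − (σ_f/2)‖·‖² and −f − (σ_{−f}/2)‖·‖² are convex, and let γ > 0 satisfy 1 + γσ_{−f} > 0. Then for all s, s′ ∈ ℝ^p, writing u = prox_{−γf}(s) and u′ = prox_{−γf}(s′) (the unique minimizers of w ↦ −f(w) + (1/(2γ))‖w − ·‖²), one has (1/(1 − γσ_f))‖s − s′‖² ≤ ⟨u − u′, s − s′⟩ ≤ (1/(1 + γσ_{−f}))‖s − s′‖². -/

import Mathlib

open scoped InnerProductSpace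
noncomputable section

/-- `ℝ^p` as a Euclidean space. -/
abbrev Euc (p : ℕ) := EuclideanSpace ℝ (Fin p)

variable {p : ℕ}

/-- `u` minimizes `w ↦ −f(w) + (1/(2γ))‖w − s‖²` (for real-valued `f`). -/
def NegProxObjMin (f : Euc p → ℝ) (γ : ℝ) (s u : Euc p) : Prop :=
  ∀ w, -f u + 1/(2*γ) * ‖u - s‖^2 ≤ -f w + 1/(2*γ) * ‖w - s‖^2

section Aux

variable {E : Type*} [NormedAddCommGroup E] [InnerProductSpace ℝ E]

/-- Gradient inequality for a differentiable convex function. -/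
lemma convex_grad_ineq {g : E → ℝ} (hc : ConvexOn ℝ Set.univ g) {x : E} {l : E →L[ℝ] ℝ}
    (hx : HasFDerivAt g l x) (y : E) : g x + l (y - x) ≤ g y := by
  set φ : ℝ → ℝ := fun t => g (x + t • (y - x)) with hφ
  have hline : HasDerivAt (fun t : ℝ => x + t • (y - x)) (y - x) 0 := by
    simpa using ((hasDerivAt_id (0:ℝ)).smul_const (y - x)).const_add x
  have hder : HasDerivAt φ (l (y - x)) 0 := by
    have h := hx.comp_hasDerivAt_of_eq (0:ℝ) hline (by simp)
    exact h
  have hφc : ConvexOn ℝ Set.univ φ := by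
    have h := hc.comp_affineMap (AffineMap.lineMap x y : ℝ →ᵃ[ℝ] E)
    have heq : (g ∘ (AffineMap.lineMap x y : ℝ →ᵃ[ℝ] E)) = φ := by
      funext t
      simp only [Function.comp_apply, AffineMap.lineMap_apply_module, φ]
      congr 1
      module
    rw [heq] at h
    simpa using h
  have hs := hφc.le_slope_of_hasDerivAt (Set.mem_univ (0:ℝ)) (Set.mem_univ (1:ℝ)) one_pos hder
  rw [slope_def_field] at hs
  have h1 : φ 1 = g y := by simp [φ]
  have h0 : φ 0 = g x := by simp [φ]
  rw [h1, h0] at hs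
  have : l (y - x) ≤ g y - g x := by
    simpa using hs
  linarith

/-- Gradient of the squared norm. -/
lemma hasFDerivAt_sqnorm (x : E) :
    HasFDerivAt (fun w : E => ‖w‖^2) (innerSL ℝ ((2:ℝ) • x)) x := by
  have hfun : (fun w : E => ‖w‖^2) = fun w : E => ⟪w, w⟫_ℝ :=
    funext fun w => (real_inner_self_eq_norm_sq w).symm
  rw [hfun]
  have h := (hasFDerivAt_id x).inner ℝ (hasFDerivAt_id x)
  refine h.congr_fderiv ?_
  ext w
  simp [fderivInnerCLM_apply, real_inner_smul_left, real_inner_comm]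
  ring

lemma hasGradAt_sub_sq {g : E → ℝ} {v x : E} (hg : HasFDerivAt g (innerSL ℝ v) x) (c : ℝ) :
    HasFDerivAt (fun w => g w - c/2 * ‖w‖^2) (innerSL ℝ (v - c • x)) x := by
  have h2 := (hasFDerivAt_sqnorm x).const_mul (c/2)
  refine (hg.sub h2).congr_fderiv ?_
  ext w
  simp [inner_sub_left, real_inner_smul_left]
  ring

/-- Monotonicity of the gradient of a convex function. -/
lemma grad_mono {g : E → ℝ} (hc : ConvexOn ℝ Set.univ g) {x y gx gy : E}
    (hx : HasFDerivAt g (innerSL ℝ gx) x) (hy : HasFDerivAt g (innerSL ℝ gy) y) :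
    0 ≤ ⟪gx - gy, x - y⟫_ℝ := by
  have h1 := convex_grad_ineq hc hx y
  have h2 := convex_grad_ineq hc hy x
  rw [innerSL_apply_apply] at h1 h2
  rw [inner_sub_left]
  have e1 : ⟪gx, y - x⟫_ℝ = -⟪gx, x - y⟫_ℝ := by
    rw [← inner_neg_right]; congr 1; abel
  rw [e1] at h1
  linarith

/-- One-sided cocoercivity estimate for a convex `L`-smooth function. -/
lemma smooth_lower {h : E → ℝ} (hc : ConvexOn ℝ Set.univ h) {L : ℝ} (hL : 0 < L)
    (hsm : ConvexOn ℝ Set.univ (fun w => -h w + L/2 * ‖w‖^2))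
    {x y gx gy : E} (hx : HasFDerivAt h (innerSL ℝ gx) x)
    (hy : HasFDerivAt h (innerSL ℝ gy) y) :
    h x + ⟪gx, y - x⟫_ℝ + 1/(2*L) * ‖gy - gx‖^2 ≤ h y := by
  have hL' : L ≠ 0 := ne_of_gt hL
  set z := y - L⁻¹ • (gy - gx) with hz
  -- gradient of the smooth part at y
  have hneg : HasFDerivAt (fun w => -h w) (innerSL ℝ (-gy)) y := by
    refine hy.neg.congr_fderiv ?_
    ext w; simp
  have hsq := (hasFDerivAt_sqnorm y).const_mul (L/2)
  have hsmg : HasFDerivAt (fun w => -h w + L/2 * ‖w‖^2) (innerSL ℝ (-gy + L • y)) y := by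
    refine (hneg.add hsq).congr_fderiv ?_
    ext w
    simp [inner_add_left, real_inner_smul_left]
    ring
  have h1 := convex_grad_ineq hc hx z
  have h2 := convex_grad_ineq hsm hsmg z
  rw [innerSL_apply_apply] at h1 h2
  -- scalar identities
  have hzy : z - y = -(L⁻¹ • (gy - gx)) := by rw [hz]; abel
  have e1 : ⟪gx, z - x⟫_ℝ = ⟪gx, y - x⟫_ℝ - L⁻¹ * ⟪gx, gy - gx⟫_ℝ := by
    have : z - x = (y - x) + (z - y) := by abel
    rw [this, inner_add_right, hzy, inner_neg_right, real_inner_smul_right]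
    ring
  have e2 : ⟪-gy + L • y, z - y⟫_ℝ
      = -(L⁻¹ * (-⟪gy, gy - gx⟫_ℝ + L * ⟪y, gy - gx⟫_ℝ)) := by
    rw [hzy, inner_neg_right, real_inner_smul_right, inner_add_left, inner_neg_left,
      real_inner_smul_left]
  have e3 : ‖z‖^2 = ‖y‖^2 - 2 * L⁻¹ * ⟪y, gy - gx⟫_ℝ + L⁻¹^2 * ‖gy - gx‖^2 := by
    rw [hz, norm_sub_sq_real, real_inner_smul_right, norm_smul]
    simp [Real.norm_eq_abs, mul_pow, sq_abs]
    ring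
  have e4 : ⟪gy, gy - gx⟫_ℝ - ⟪gx, gy - gx⟫_ℝ = ‖gy - gx‖^2 := by
    rw [← inner_sub_left, real_inner_self_eq_norm_sq]
  rw [e1] at h1
  rw [e2, e3] at h2
  have hfe : 1/(2*L) * ‖gy - gx‖^2 = L⁻¹ * ‖gy - gx‖^2 - L⁻¹/2 * ‖gy - gx‖^2 := by
    field_simp
    ring
  have e5 : L/2 * (‖y‖^2 - 2 * L⁻¹ * ⟪y, gy - gx⟫_ℝ + L⁻¹^2 * ‖gy - gx‖^2)
      = L/2 * ‖y‖^2 - ⟪y, gy - gx⟫_ℝ + L⁻¹/2 * ‖gy - gx‖^2 := by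
    field_simp
  have e6 : -(L⁻¹ * (-⟪gy, gy - gx⟫_ℝ + L * ⟪y, gy - gx⟫_ℝ))
      = L⁻¹ * ⟪gy, gy - gx⟫_ℝ - ⟪y, gy - gx⟫_ℝ := by
    field_simp
    ring
  rw [e5, e6] at h2
  have e7 : L⁻¹ * ⟪gy, gy - gx⟫_ℝ - L⁻¹ * ⟪gx, gy - gx⟫_ℝ = L⁻¹ * ‖gy - gx‖^2 := by
    rw [← mul_sub, e4]
  linarith [h1, h2, e7, hfe]

/-- Cocoercivity (Baillon–Haddad) for a convex `L`-smooth function. -/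
lemma cocoercive {h : E → ℝ} (hc : ConvexOn ℝ Set.univ h) {L : ℝ} (hL : 0 < L)
    (hsm : ConvexOn ℝ Set.univ (fun w => -h w + L/2 * ‖w‖^2))
    {x y gx gy : E} (hx : HasFDerivAt h (innerSL ℝ gx) x)
    (hy : HasFDerivAt h (innerSL ℝ gy) y) :
    ‖gx - gy‖^2 ≤ L * ⟪gx - gy, x - y⟫_ℝ := by
  have h1 := smooth_lower hc hL hsm hx hy
  have h2 := smooth_lower hc hL hsm hy hx
  have hnrm : ‖gx - gy‖ = ‖gy - gx‖ := norm_sub_rev _ _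
  have e1 : ⟪gx, y - x⟫_ℝ = -⟪gx, x - y⟫_ℝ := by
    rw [← inner_neg_right]; congr 1; abel
  have e2 : ⟪gx - gy, x - y⟫_ℝ = ⟪gx, x - y⟫_ℝ - ⟪gy, x - y⟫_ℝ := inner_sub_left _ _ _
  have hL' : L ≠ 0 := ne_of_gt hL
  have hkey : 1/L * ‖gy - gx‖^2 ≤ ⟪gx - gy, x - y⟫_ℝ := by
    have : 1/(2*L) * ‖gy - gx‖^2 + 1/(2*L) * ‖gx - gy‖^2 = 1/L * ‖gy - gx‖^2 := by
      rw [hnrm]; field_simp; ring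
    linarith
  rw [hnrm]
  calc ‖gy - gx‖^2 = L * (1/L * ‖gy - gx‖^2) := by field_simp
    _ ≤ L * ⟪gx - gy, x - y⟫_ℝ := by
        exact mul_le_mul_of_nonneg_left hkey hL.le

lemma convexOn_half_sq : ConvexOn ℝ Set.univ (fun x : E => 1/2 * ‖x‖^2) := by
  refine ⟨convex_univ, fun x _ y _ a b ha hb hab => ?_⟩
  have h1 : ‖a • x + b • y‖ ≤ a * ‖x‖ + b * ‖y‖ := by
    calc ‖a • x + b • y‖ ≤ ‖a • x‖ + ‖b • y‖ := norm_add_le _ _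
      _ = a * ‖x‖ + b * ‖y‖ := by
          rw [norm_smul, norm_smul, Real.norm_eq_abs, Real.norm_eq_abs,
            abs_of_nonneg ha, abs_of_nonneg hb]
  have h2 : ‖a • x + b • y‖^2 ≤ (a * ‖x‖ + b * ‖y‖)^2 :=
    pow_le_pow_left₀ (norm_nonneg _) h1 2
  simp only [smul_eq_mul]
  nlinarith [h2, mul_nonneg (mul_nonneg ha hb) (sq_nonneg (‖x‖ - ‖y‖))]

end Aux


/-- Pure scalar arithmetic core of the main theorem. -/
lemma scalar_bounds (γ σf σnf T D G : ℝ) (hγ : 0 < γ) (hγσ : 0 < 1 + γ * σnf)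
    (hL : σf + σnf ≤ 0) (hD : 0 ≤ D) (hG : 0 ≤ G)
    (hA : 0 ≤ T - σf * D) (hB : T ≤ -σnf * D) (hCS : T * T ≤ G * D)
    (hC : G - 2*σf*T + σf^2*D ≤ (-(σf + σnf)) * (T - σf * D)) :
    1/(1 - γ*σf) * (D - 2*γ*T + γ^2*G) ≤ D - γ*T ∧
      D - γ*T ≤ 1/(1 + γ*σnf) * (D - 2*γ*T + γ^2*G) := by
  have hα : 0 < 1 - γ * σf := by
    nlinarith [mul_nonneg hγ.le (neg_nonneg.2 hL)]
  constructor
  · have hmain : D - 2*γ*T + γ^2*G ≤ (1 - γ*σf) * (D - γ*T) := by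
      nlinarith [mul_le_mul_of_nonneg_left hC (sq_nonneg γ),
        mul_nonneg (mul_nonneg hγ.le hγσ.le) hA]
    rw [one_div, inv_mul_le_iff₀ hα]
    linarith
  · have hmain : (1 + γ*σnf) * (D - γ*T) ≤ D - 2*γ*T + γ^2*G := by
      by_cases hD0 : D = 0
      · have hT : T = 0 := by nlinarith [mul_self_nonneg T]
        rw [hD0, hT]
        nlinarith [mul_nonneg (sq_nonneg γ) hG]
      · have hDpos : 0 < D := lt_of_le_of_ne hD (Ne.symm hD0)
        have h1 : 0 ≤ -σnf * D - T := by linarith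
        have h2 : 0 ≤ D - γ * T := by
          nlinarith [mul_nonneg hγ.le h1, mul_nonneg hγσ.le hDpos.le]
        have hkey : (1 + γ*σnf) * (D - γ*T) * D ≤ (D - 2*γ*T + γ^2*G) * D := by
          nlinarith [mul_nonneg (mul_nonneg hγ.le h1) h2,
            mul_nonneg (sq_nonneg γ) (sub_nonneg.2 hCS)]
        exact le_of_mul_le_mul_right hkey hDpos
    rw [one_div, ← div_eq_inv_mul, le_div_iff₀ hγσ]
    linarith

/-- First-order optimality condition for the negative prox objective. -/
lemma prox_grad {f : Euc p → ℝ} (hf : Differentiable ℝ f) {γ : ℝ} (hγ : 0 < γ) {s u : Euc p}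
    (hu : NegProxObjMin f γ s u) :
    HasFDerivAt f (innerSL ℝ (γ⁻¹ • (u - s))) u := by
  have hγ' : γ ≠ 0 := ne_of_gt hγ
  set φ : Euc p → ℝ := fun w => -f w + 1/(2*γ) * ‖w - s‖^2 with hφ
  have hmin : IsLocalMin φ u := Filter.Eventually.of_forall hu
  have hsq : HasFDerivAt (fun w : Euc p => ‖w - s‖^2) (innerSL ℝ ((2:ℝ) • (u - s))) u := by
    have h := (hasFDerivAt_sqnorm (u - s)).comp u ((hasFDerivAt_id u).sub_const s)
    refine h.congr_fderiv ?_
    ext w; simp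
  have hφd : HasFDerivAt φ (-(fderiv ℝ f u) + (1/(2*γ)) • innerSL ℝ ((2:ℝ) • (u - s))) u :=
    ((hf u).hasFDerivAt.neg).add (hsq.const_mul (1/(2*γ)))
  have h0 := hmin.hasFDerivAt_eq_zero hφd
  have hl : fderiv ℝ f u = innerSL ℝ (γ⁻¹ • (u - s)) := by
    ext w
    have h1 := DFunLike.congr_fun h0 w
    simp only [ContinuousLinearMap.add_apply, ContinuousLinearMap.neg_apply,
      ContinuousLinearMap.smul_apply, ContinuousLinearMap.zero_apply, innerSL_apply_apply,
      real_inner_smul_left, smul_eq_mul] at h1 ⊢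
    field_simp at h1 ⊢
    linarith
  exact hl ▸ (hf u).hasFDerivAt

/-- with `f − (σ_f/2)‖·‖²` and `−f − (σ_{−f}/2)‖·‖²` convex and `1 + γσ_{−f} > 0`,
for `u = prox_{−γf}(s)`, `u′ = prox_{−γf}(s′)` one has
`(1/(1 − γσ_f))‖s − s′‖² ≤ ⟨u − u′, s − s′⟩ ≤ (1/(1 + γσ_{−f}))‖s − s′‖²`. -/
theorem statement8
    (f : Euc p → ℝ) (hf : Differentiable ℝ f)
    (σf σnf : ℝ)
    (hconvf : ConvexOn ℝ Set.univ (fun x => f x - σf/2 * ‖x‖^2))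
    (hconvnf : ConvexOn ℝ Set.univ (fun x => -f x - σnf/2 * ‖x‖^2))
    (γ : ℝ) (hγ : 0 < γ) (hγσ : 0 < 1 + γ * σnf)
    (s s' u u' : Euc p)
    (hu : NegProxObjMin f γ s u) (hu' : NegProxObjMin f γ s' u') :
    1/(1 - γ * σf) * ‖s - s'‖^2 ≤ ⟪u - u', s - s'⟫_ℝ ∧
      ⟪u - u', s - s'⟫_ℝ ≤ 1/(1 + γ * σnf) * ‖s - s'‖^2 := by
  have hγ' : γ ≠ 0 := ne_of_gt hγ
  have hgu0 : HasFDerivAt f (innerSL ℝ (γ⁻¹ • (u - s))) u := prox_grad hf hγ hu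
  have hgu'0 : HasFDerivAt f (innerSL ℝ (γ⁻¹ • (u' - s'))) u' := prox_grad hf hγ hu'
  obtain ⟨gu, hgu_def⟩ : ∃ v : Euc p, v = γ⁻¹ • (u - s) := ⟨_, rfl⟩
  obtain ⟨gu', hgu'_def⟩ : ∃ v : Euc p, v = γ⁻¹ • (u' - s') := ⟨_, rfl⟩
  obtain ⟨d, hd⟩ : ∃ v : Euc p, v = u - u' := ⟨_, rfl⟩
  obtain ⟨g, hgdef⟩ : ∃ v : Euc p, v = gu - gu' := ⟨_, rfl⟩
  rw [← hgu_def] at hgu0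
  rw [← hgu'_def] at hgu'0
  rw [← hd]
  have hgu := hgu0
  have hgu' := hgu'0
  have hss : s - s' = d - γ • g := by
    have h1 : γ • gu = u - s := by
      rw [hgu_def, smul_smul, mul_inv_cancel₀ hγ', one_smul]
    have h2 : γ • gu' = u' - s' := by
      rw [hgu'_def, smul_smul, mul_inv_cancel₀ hγ', one_smul]
    rw [hgdef, smul_sub, h1, h2, hd]; abel
  -- gradients of the two auxiliary convex functions
  have hg1u : HasFDerivAt (fun x => f x - σf/2 * ‖x‖^2) (innerSL ℝ (gu - σf • u)) u :=
    hasGradAt_sub_sq hgu σf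
  have hg1u' : HasFDerivAt (fun x => f x - σf/2 * ‖x‖^2) (innerSL ℝ (gu' - σf • u')) u' :=
    hasGradAt_sub_sq hgu' σf
  have hnegu : HasFDerivAt (fun x => -f x) (innerSL ℝ (-gu)) u := by
    refine hgu.neg.congr_fderiv ?_
    ext w; simp
  have hnegu' : HasFDerivAt (fun x => -f x) (innerSL ℝ (-gu')) u' := by
    refine hgu'.neg.congr_fderiv ?_
    ext w; simp
  have hg2u : HasFDerivAt (fun x => -f x - σnf/2 * ‖x‖^2) (innerSL ℝ (-gu - σnf • u)) u :=
    hasGradAt_sub_sq hnegu σnf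
  have hg2u' : HasFDerivAt (fun x => -f x - σnf/2 * ‖x‖^2) (innerSL ℝ (-gu' - σnf • u')) u' :=
    hasGradAt_sub_sq hnegu' σnf
  have hvec1 : (gu - σf • u) - (gu' - σf • u') = g - σf • d := by
    rw [hgdef, hd, smul_sub]; abel
  have hvec2 : (-gu - σnf • u) - (-gu' - σnf • u') = -g - σnf • d := by
    rw [hgdef, hd, smul_sub]; abel
  have hA0 := grad_mono hconvf hg1u hg1u'
  rw [← hd, hvec1] at hA0
  have hB0 := grad_mono hconvnf hg2u hg2u'
  rw [← hd, hvec2] at hB0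
  have hA : 0 ≤ ⟪g, d⟫_ℝ - σf * ‖d‖^2 := by
    rwa [inner_sub_left, real_inner_smul_left, real_inner_self_eq_norm_sq] at hA0
  have hB : ⟪g, d⟫_ℝ ≤ -σnf * ‖d‖^2 := by
    rw [inner_sub_left, inner_neg_left, real_inner_smul_left,
      real_inner_self_eq_norm_sq] at hB0
    linarith
  have hCS : ⟪g, d⟫_ℝ * ⟪g, d⟫_ℝ ≤ ‖g‖^2 * ‖d‖^2 := by
    have h := real_inner_mul_inner_self_le g d
    rwa [real_inner_self_eq_norm_sq, real_inner_self_eq_norm_sq] at h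
  have hI : ⟪d, s - s'⟫_ℝ = ‖d‖^2 - γ * ⟪g, d⟫_ℝ := by
    rw [hss, inner_sub_right, real_inner_self_eq_norm_sq, real_inner_smul_right,
      real_inner_comm]
  have hN : ‖s - s'‖^2 = ‖d‖^2 - 2*γ*⟪g, d⟫_ℝ + γ^2 * ‖g‖^2 := by
    rw [hss, norm_sub_sq_real, real_inner_smul_right, norm_smul, real_inner_comm]
    simp [Real.norm_eq_abs, mul_pow, sq_abs]
    ring
  rcases le_or_gt (σf + σnf) 0 with hL | hL
  · -- main case : σf + σnf ≤ 0
    have hC : ‖g - σf • d‖^2 ≤ (-(σf + σnf)) * ⟪g - σf • d, d⟫_ℝ := by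
      rcases hL.lt_or_eq with hL' | hL'
      · -- strictly smooth case
        have hLpos : 0 < -(σf + σnf) := by linarith
        have hsm : ConvexOn ℝ Set.univ
            (fun x : Euc p => -(f x - σf/2 * ‖x‖^2) + (-(σf + σnf))/2 * ‖x‖^2) := by
          have heq : (fun x : Euc p => -(f x - σf/2 * ‖x‖^2) + (-(σf + σnf))/2 * ‖x‖^2)
              = fun x => -f x - σnf/2 * ‖x‖^2 := funext fun x => by ring
          rw [heq]; exact hconvnf
        have h := cocoercive hconvf hLpos hsm hg1u hg1u'
        rwa [hvec1, ← hd] at h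
      · -- L = 0 : gradient difference vanishes
        have hσ : σf = -σnf := by linarith
        have hsm : ConvexOn ℝ Set.univ
            (fun x : Euc p => -(f x - σf/2 * ‖x‖^2) + (1:ℝ)/2 * ‖x‖^2) := by
          have h := hconvnf.add (convexOn_half_sq (E := Euc p))
          have heq : (fun x : Euc p => -(f x - σf/2 * ‖x‖^2) + (1:ℝ)/2 * ‖x‖^2)
              = (fun x : Euc p => -f x - σnf/2 * ‖x‖^2) + fun x => 1/2 * ‖x‖^2 :=
            funext fun x => by simp [hσ]; ring
          rw [heq]; exact h
        have h := cocoercive hconvf one_pos hsm hg1u hg1u'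
        rw [hvec1, ← hd] at h
        have hed : ⟪g - σf • d, d⟫_ℝ = ⟪g, d⟫_ℝ - σf * ‖d‖^2 := by
          rw [inner_sub_left, real_inner_smul_left, real_inner_self_eq_norm_sq]
        have hle : ⟪g - σf • d, d⟫_ℝ ≤ 0 := by
          rw [hed, hσ]; linarith
        have hsq0 : ‖g - σf • d‖^2 ≤ 0 := by linarith [h, hle]
        rw [hL']
        simp only [neg_zero, zero_mul]
        linarith
    -- scalar form of hC
    have hEe : ‖g - σf • d‖^2 = ‖g‖^2 - 2*σf*⟪g, d⟫_ℝ + σf^2 * ‖d‖^2 := by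
      rw [norm_sub_sq_real, real_inner_smul_right, norm_smul]
      simp [Real.norm_eq_abs, mul_pow, sq_abs]
      ring
    have hed : ⟪g - σf • d, d⟫_ℝ = ⟪g, d⟫_ℝ - σf * ‖d‖^2 := by
      rw [inner_sub_left, real_inner_smul_left, real_inner_self_eq_norm_sq]
    rw [hEe, hed] at hC
    have hsc := scalar_bounds γ σf σnf ⟪g, d⟫_ℝ (‖d‖^2) (‖g‖^2) hγ hγσ hL
      (by positivity) (by positivity) hA hB hCS hC
    rw [hI, hN]
    exact hsc
  · -- degenerate case : σf + σnf > 0 forces s = s'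
    have hDle : ‖d‖^2 ≤ 0 := by nlinarith [hA, hB]
    have hd0 : d = 0 := by
      have h1 : ‖d‖^2 = 0 := le_antisymm hDle (by positivity)
      have h2 : ‖d‖ = 0 := sq_eq_zero_iff.mp h1
      exact norm_eq_zero.mp h2
    have huu' : u = u' := by
      have h2 := hd0
      rw [hd, sub_eq_zero] at h2
      exact h2
    have hg0 : g = 0 := by
      have h1 : HasFDerivAt f (innerSL ℝ gu') u := huu' ▸ hgu'
      have h2 := hgu.unique h1
      have h3 := DFunLike.congr_fun h2 (gu - gu')
      rw [innerSL_apply_apply, innerSL_apply_apply] at h3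
      have h4 : ⟪gu - gu', gu - gu'⟫_ℝ = 0 := by
        rw [inner_sub_left]; linarith
      rw [hgdef]
      exact inner_self_eq_zero.mp h4
    have hss0 : s - s' = 0 := by rw [hss, hd0, hg0]; simp
    rw [hss0, hd0]
    simp

end
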